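/- Suppose $a^{(1)}(z)$ is a vector of linear holomorphic polynomials on $\mathbb{C}^n$, $s(z,\bar z)$ and $s^\sharp(z,\bar z)$ are real bihomogeneous polynomials of bidegree $(2,2)$ with $\triangle_\ell s = \triangle_\ell s^\sharp = 0$, and $\langle a^{(1)}(z), \bar z\rangle_\ell \, |z|_\ell^2 = \frac{1}{4}(s(z,\bar z) - s^\sharp(z,\bar z))$ identically. If $n \ge 2$ and $0 \le \ell \le n/2$, then $a^{(1)} \equiv 0$ and $s \equiv s^\sharp$. -/

import Mathlib

open scoped BigOperators ComplexConjugate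

noncomputable section

/-- The sign `ε_j`: `-1` for the first `ℓ` indices, `+1` afterwards. -/
def eps (n ℓ : ℕ) (j : Fin n) : ℂ := if (j : ℕ) < ℓ then -1 else 1

/-- The matrix `g_0^{β̄ α}`: diagonal with entries `-1` (first `ℓ`) and `+1`. -/
def g0 (n ℓ : ℕ) (β α : Fin n) : ℂ := if β = α then eps n ℓ β else 0

/-- The polarized bidegree (2,2) polynomial
`s(z,w) = ∑ s_{α β̄ γ δ̄} z_α w_β z_γ w_δ`, where `w` plays the role of `z̄`. -/
def quartic {n : ℕ} (s : Fin n → Fin n → Fin n → Fin n → ℂ) :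
    (Fin n → ℂ) → (Fin n → ℂ) → ℂ :=
  fun z w => ∑ α : Fin n, ∑ β : Fin n, ∑ γ : Fin n, ∑ δ : Fin n,
    s α β γ δ * z α * w β * z γ * w δ

/-- Holomorphic partial derivative `∂/∂z_j` of a polarized function `f(z,w)`. -/
def Dz {n : ℕ} (f : (Fin n → ℂ) → (Fin n → ℂ) → ℂ) (j : Fin n) :
    (Fin n → ℂ) → (Fin n → ℂ) → ℂ :=
  fun z w => fderiv ℂ (fun z' => f z' w) z (Pi.single j 1)

/-- Antiholomorphic partial derivative `∂/∂z̄_j`, acting on the second (polarized) slot. -/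
def Dw {n : ℕ} (f : (Fin n → ℂ) → (Fin n → ℂ) → ℂ) (j : Fin n) :
    (Fin n → ℂ) → (Fin n → ℂ) → ℂ :=
  fun z w => fderiv ℂ (fun w' => f z w') w (Pi.single j 1)

/-- The signed Laplacian `△_ℓ = -∑_{j≤ℓ} ∂²/∂z_j∂z̄_j + ∑_{j>ℓ} ∂²/∂z_j∂z̄_j`. -/
def lapL {n : ℕ} (ℓ : ℕ) (f : (Fin n → ℂ) → (Fin n → ℂ) → ℂ) :
    (Fin n → ℂ) → (Fin n → ℂ) → ℂ :=
  fun z w => ∑ j : Fin n, eps n ℓ j * Dw (Dz f j) j z w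

/-- The signed norm `|z|_ℓ² = -∑_{j≤ℓ}|z_j|² + ∑_{j>ℓ}|z_j|²` (as a complex number). -/
def nSq (n ℓ : ℕ) (z : Fin n → ℂ) : ℂ := ∑ j : Fin n, eps n ℓ j * z j * conj (z j)

/-- A bidegree (1,1) polynomial `∑_{α,β} a_{α β̄} z_α z̄_β`. -/
def herm {n : ℕ} (a : Fin n → Fin n → ℂ) (z : Fin n → ℂ) : ℂ :=
  ∑ α : Fin n, ∑ β : Fin n, a α β * z α * conj (z β)

section Aux

lemma key11 (d00 d01 d10 d11 : ℂ)
    (h : ∀ l : ℂ, d00 + d01 * conj l + d10 * l + d11 * (l * conj l) = 0) : d10 = 0 := by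
  have h1 := h 1
  have h2 := h (-1)
  have h3 := h Complex.I
  simp only [map_one, map_neg, Complex.conj_I, mul_one, one_mul, mul_neg, neg_neg] at h1 h2 h3
  linear_combination (1/4 + Complex.I/4) * h1 + (-1/4 + Complex.I/4) * h2 + (-Complex.I/2) * h3
    + (-((1/2)*d01 + (-1/2)*d10 + (1/2)*d11*Complex.I)) * Complex.I_sq

lemma key22 (c00 c01 c02 c10 c11 c12 c20 c21 c22 : ℂ)
    (h : ∀ l : ℂ, c00 + c01 * conj l + c02 * conj l ^ 2 + c10 * l + c11 * (l * conj l)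
      + c12 * (l * conj l ^ 2) + c20 * l ^ 2 + c21 * (l ^ 2 * conj l)
      + c22 * (l ^ 2 * conj l ^ 2) = 0) : c20 = 0 := by
  have h0 := h 0
  have h1 := h 1
  have h2 := h (-1)
  have h3 := h 2
  have h4 := h (-2)
  have h5 := h Complex.I
  have h6 := h (-Complex.I)
  have h7 := h (2 * Complex.I)
  have h8 := h (1 + Complex.I)
  simp only [map_zero, map_one, map_neg, map_mul, map_add, map_ofNat, Complex.conj_I]
    at h0 h1 h2 h3 h4 h5 h6 h7 h8
  linear_combination (-Complex.I/8) * h0 + (1/8 + 5*Complex.I/24) * h1 + (1/8 + Complex.I/24) * h2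
    + (Complex.I/48) * h3 + (-Complex.I/48) * h4 + (-1/8 + Complex.I/8) * h5
    + (-1/8 - Complex.I/24) * h6 + (Complex.I/24) * h7 + (-Complex.I/4) * h8
    + (-((1/4)*c02 + (1/4)*c11 + (1/4)*c12*Complex.I + (1/4)*c12*Complex.I^2 + (-3/4)*c20
        + (1/4)*c21*Complex.I + (-1/4)*c21*Complex.I^2 + (1/4)*c22 + (-1/4)*c22*Complex.I^2
        + (1/2)*c22*Complex.I^3)) * Complex.I_sq

/-- The coefficient tensor of the polarized form `⟨a z, w⟩_ℓ · ⟨z, w⟩_ℓ`. -/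
def uMat (n ℓ : ℕ) (a : Fin n → Fin n → ℂ) : Fin n → Fin n → Fin n → Fin n → ℂ :=
  fun α β γ δ => eps n ℓ β * a β α * (if γ = δ then eps n ℓ γ else 0)

variable {n : ℕ}

lemma eps_sq (n ℓ : ℕ) (j : Fin n) : eps n ℓ j * eps n ℓ j = 1 := by
  unfold eps; split <;> norm_num

lemma eps_ne (n ℓ : ℕ) (j : Fin n) : eps n ℓ j ≠ 0 := by
  unfold eps; split <;> norm_num

lemma fderiv_sum_mul {ι : Type*} [Fintype ι] (g : ι → ℂ) (p q : ι → Fin n)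
    (x0 : Fin n → ℂ) (j : Fin n) :
    fderiv ℂ (fun x : Fin n → ℂ => ∑ i : ι, g i * x (p i) * x (q i)) x0 (Pi.single j 1)
      = ∑ i : ι, g i * ((if p i = j then x0 (q i) else 0) + (if q i = j then x0 (p i) else 0)) := by
  have H : HasFDerivAt (fun x : Fin n → ℂ => ∑ i : ι, g i * x (p i) * x (q i))
      (∑ i : ι, ((g i * x0 (p i)) • (ContinuousLinearMap.proj (q i) : (Fin n → ℂ) →L[ℂ] ℂ)
        + x0 (q i) • (g i • (ContinuousLinearMap.proj (p i) : (Fin n → ℂ) →L[ℂ] ℂ)))) x0 := by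
    apply HasFDerivAt.fun_sum
    intro i _
    exact (((ContinuousLinearMap.proj (p i) : (Fin n → ℂ) →L[ℂ] ℂ).hasFDerivAt.const_mul
      (g i)).mul ((ContinuousLinearMap.proj (q i) : (Fin n → ℂ) →L[ℂ] ℂ).hasFDerivAt))
  rw [H.fderiv, ContinuousLinearMap.sum_apply]
  refine Finset.sum_congr rfl fun i _ => ?_
  simp [ContinuousLinearMap.proj_apply, Pi.single_apply]
  split_ifs <;> ring

lemma Dz_quartic (v : Fin n → Fin n → Fin n → Fin n → ℂ) (j : Fin n) (z w : Fin n → ℂ) :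
    Dz (quartic v) j z w = ∑ α : Fin n, ∑ β : Fin n, ∑ γ : Fin n, ∑ δ : Fin n,
      v α β γ δ * w β * w δ * ((if α = j then z γ else 0) + (if γ = j then z α else 0)) := by
  have hf : (fun z' => quartic v z' w)
      = fun x : Fin n → ℂ => ∑ i : Fin n × Fin n × Fin n × Fin n,
          (v i.1 i.2.1 i.2.2.1 i.2.2.2 * w i.2.1 * w i.2.2.2) * x i.1 * x i.2.2.1 := by
    funext x
    simp only [quartic, Fintype.sum_prod_type]
    refine Finset.sum_congr rfl fun α _ => Finset.sum_congr rfl fun β _ =>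
      Finset.sum_congr rfl fun γ _ => Finset.sum_congr rfl fun δ _ => by ring
  rw [Dz, hf, fderiv_sum_mul]
  simp only [Fintype.sum_prod_type]

lemma lap_quartic (ℓ : ℕ) (v : Fin n → Fin n → Fin n → Fin n → ℂ) (z w : Fin n → ℂ) :
    lapL ℓ (quartic v) z w = ∑ j : Fin n, eps n ℓ j *
      ∑ α : Fin n, ∑ β : Fin n, ∑ γ : Fin n, ∑ δ : Fin n,
        v α β γ δ * ((if α = j then z γ else 0) + (if γ = j then z α else 0))
          * ((if β = j then w δ else 0) + (if δ = j then w β else 0)) := by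
  unfold lapL
  refine Finset.sum_congr rfl fun j _ => ?_
  congr 1
  have hf : (fun w' => Dz (quartic v) j z w')
      = fun x : Fin n → ℂ => ∑ i : Fin n × Fin n × Fin n × Fin n,
          (v i.1 i.2.1 i.2.2.1 i.2.2.2
            * ((if i.1 = j then z i.2.2.1 else 0) + (if i.2.2.1 = j then z i.1 else 0)))
            * x i.2.1 * x i.2.2.2 := by
    funext x
    rw [Dz_quartic]
    simp only [Fintype.sum_prod_type]
    refine Finset.sum_congr rfl fun α _ => Finset.sum_congr rfl fun β _ =>
      Finset.sum_congr rfl fun γ _ => Finset.sum_congr rfl fun δ _ => by ring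
  rw [Dw, hf, fderiv_sum_mul]
  simp only [Fintype.sum_prod_type]

lemma quartic_lin (u s t : Fin n → Fin n → Fin n → Fin n → ℂ) (c : ℂ) (z w : Fin n → ℂ) :
    quartic (fun α β γ δ => u α β γ δ - c * (s α β γ δ - t α β γ δ)) z w
      = quartic u z w - c * (quartic s z w - quartic t z w) := by
  simp only [quartic, Finset.mul_sum, ← Finset.sum_sub_distrib]
  refine Finset.sum_congr rfl fun α _ => Finset.sum_congr rfl fun β _ =>
    Finset.sum_congr rfl fun γ _ => Finset.sum_congr rfl fun δ _ => by ring

lemma quartic_smul_sub (s t : Fin n → Fin n → Fin n → Fin n → ℂ) (c : ℂ) (z w : Fin n → ℂ) :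
    quartic (fun α β γ δ => c * (s α β γ δ - t α β γ δ)) z w
      = c * (quartic s z w - quartic t z w) := by
  simp only [quartic, Finset.mul_sum, ← Finset.sum_sub_distrib]
  refine Finset.sum_congr rfl fun α _ => Finset.sum_congr rfl fun β _ =>
    Finset.sum_congr rfl fun γ _ => Finset.sum_congr rfl fun δ _ => by ring

lemma expand22 (v : Fin n → Fin n → Fin n → Fin n → ℂ) (z w : Fin n → ℂ) (l : ℂ) :
    quartic v (fun j => l * z j + conj (w j)) (fun j => conj l * conj (z j) + w j)
    = (∑ α : Fin n, ∑ β : Fin n, ∑ γ : Fin n, ∑ δ : Fin n,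
        v α β γ δ * conj (w α) * w β * conj (w γ) * w δ)
    + (∑ α : Fin n, ∑ β : Fin n, ∑ γ : Fin n, ∑ δ : Fin n,
        v α β γ δ * conj (w α) * conj (w γ) * (conj (z β) * w δ + w β * conj (z δ))) * conj l
    + (∑ α : Fin n, ∑ β : Fin n, ∑ γ : Fin n, ∑ δ : Fin n,
        v α β γ δ * conj (w α) * conj (z β) * conj (w γ) * conj (z δ)) * conj l ^ 2
    + (∑ α : Fin n, ∑ β : Fin n, ∑ γ : Fin n, ∑ δ : Fin n,
        v α β γ δ * (z α * conj (w γ) + conj (w α) * z γ) * w β * w δ) * l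
    + (∑ α : Fin n, ∑ β : Fin n, ∑ γ : Fin n, ∑ δ : Fin n,
        v α β γ δ * (z α * conj (w γ) + conj (w α) * z γ)
          * (conj (z β) * w δ + w β * conj (z δ))) * (l * conj l)
    + (∑ α : Fin n, ∑ β : Fin n, ∑ γ : Fin n, ∑ δ : Fin n,
        v α β γ δ * (z α * conj (w γ) + conj (w α) * z γ)
          * conj (z β) * conj (z δ)) * (l * conj l ^ 2)
    + (quartic v z w) * l ^ 2
    + (∑ α : Fin n, ∑ β : Fin n, ∑ γ : Fin n, ∑ δ : Fin n,
        v α β γ δ * z α * z γ * (conj (z β) * w δ + w β * conj (z δ))) * (l ^ 2 * conj l)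
    + (∑ α : Fin n, ∑ β : Fin n, ∑ γ : Fin n, ∑ δ : Fin n,
        v α β γ δ * z α * conj (z β) * z γ * conj (z δ)) * (l ^ 2 * conj l ^ 2) := by
  simp only [quartic, Finset.sum_mul, ← Finset.sum_add_distrib]
  refine Finset.sum_congr rfl fun α _ => Finset.sum_congr rfl fun β _ =>
    Finset.sum_congr rfl fun γ _ => Finset.sum_congr rfl fun δ _ => by ring

lemma expand11 (e : Fin n → ℂ) (a : Fin n → Fin n → ℂ) (z w : Fin n → ℂ) (l : ℂ) :
    ∑ q : Fin n, e q * (∑ p : Fin n, a q p * (l * z p + conj (w p)))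
        * (conj l * conj (z q) + w q)
    = (∑ q : Fin n, e q * (∑ p : Fin n, a q p * conj (w p)) * w q)
    + (∑ q : Fin n, e q * (∑ p : Fin n, a q p * conj (w p)) * conj (z q)) * conj l
    + (∑ q : Fin n, e q * (∑ p : Fin n, a q p * z p) * w q) * l
    + (∑ q : Fin n, e q * (∑ p : Fin n, a q p * z p) * conj (z q)) * (l * conj l) := by
  simp only [Finset.mul_sum, Finset.sum_mul, ← Finset.sum_add_distrib]
  refine Finset.sum_congr rfl fun q _ => Finset.sum_congr rfl fun p _ => by ring

lemma quartic_u (ℓ : ℕ) (a : Fin n → Fin n → ℂ) (z w : Fin n → ℂ) :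
    quartic (uMat n ℓ a) z w
      = (∑ j : Fin n, eps n ℓ j * (∑ k : Fin n, a j k * z k) * w j)
        * (∑ m : Fin n, eps n ℓ m * z m * w m) := by
  simp only [quartic, uMat, ite_mul, mul_ite, mul_zero, zero_mul,
    Finset.sum_ite_eq, Finset.mem_univ, if_true]
  rw [Finset.sum_mul_sum]
  simp only [Finset.mul_sum, Finset.sum_mul]
  rw [Finset.sum_comm]
  refine Finset.sum_congr rfl fun β _ => ?_
  rw [Finset.sum_comm]
  refine Finset.sum_congr rfl fun γ _ => Finset.sum_congr rfl fun α _ => by ring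

set_option maxHeartbeats 1000000 in
lemma Bform_u (ℓ : ℕ) (a : Fin n → Fin n → ℂ) (z w : Fin n → ℂ) :
    (∑ j : Fin n, eps n ℓ j * ∑ α : Fin n, ∑ β : Fin n, ∑ γ : Fin n, ∑ δ : Fin n,
      uMat n ℓ a α β γ δ * ((if α = j then z γ else 0) + (if γ = j then z α else 0))
        * ((if β = j then w δ else 0) + (if δ = j then w β else 0)))
    = (∑ k : Fin n, a k k) * (∑ m : Fin n, eps n ℓ m * z m * w m)
      + ((n:ℂ) + 2) * (∑ q : Fin n, eps n ℓ q * (∑ p : Fin n, a q p * z p) * w q) := by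
  simp only [uMat, add_mul, mul_add, ite_mul, mul_ite, mul_zero, zero_mul, zero_add, add_zero,
    Finset.sum_add_distrib, Finset.sum_ite_eq, Finset.sum_ite_eq', Finset.mem_univ, if_true,
    Finset.sum_ite_irrel, Finset.sum_const_zero]
  have hT1 : ∑ x : Fin n, eps n ℓ x * ∑ x_1 : Fin n, eps n ℓ x * a x x * eps n ℓ x_1 * z x_1 * w x_1
      = (∑ k : Fin n, a k k) * ∑ m : Fin n, eps n ℓ m * z m * w m := by
    rw [Finset.sum_mul]
    refine Finset.sum_congr rfl fun x _ => ?_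
    rw [Finset.mul_sum, Finset.mul_sum]
    refine Finset.sum_congr rfl fun m _ => ?_
    linear_combination (a x x * eps n ℓ m * z m * w m) * eps_sq n ℓ x
  have hT2 : ∑ x : Fin n, eps n ℓ x * ∑ x_1 : Fin n, eps n ℓ x * a x x_1 * eps n ℓ x * z x_1 * w x
      = ∑ q : Fin n, (eps n ℓ q * ∑ p : Fin n, a q p * z p) * w q := by
    refine Finset.sum_congr rfl fun x _ => ?_
    rw [Finset.mul_sum, Finset.mul_sum, Finset.sum_mul]
    refine Finset.sum_congr rfl fun p _ => ?_
    linear_combination (eps n ℓ x * a x p * z p * w x) * eps_sq n ℓ x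
  have hT3 : ∑ x : Fin n, eps n ℓ x * ∑ x_1 : Fin n, eps n ℓ x_1 * a x_1 x * eps n ℓ x * z x * w x_1
      = ∑ q : Fin n, (eps n ℓ q * ∑ p : Fin n, a q p * z p) * w q := by
    simp only [Finset.mul_sum]
    rw [Finset.sum_comm]
    refine Finset.sum_congr rfl fun q _ => ?_
    rw [Finset.sum_mul]
    refine Finset.sum_congr rfl fun p _ => ?_
    linear_combination (eps n ℓ q * a q p * z p * w q) * eps_sq n ℓ p
  have hT4 : ∑ x : Fin n, eps n ℓ x * ∑ x_1 : Fin n, ∑ x_2 : Fin n,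
        eps n ℓ x_2 * a x_2 x_1 * eps n ℓ x * z x_1 * w x_2
      = (n : ℂ) * ∑ q : Fin n, (eps n ℓ q * ∑ p : Fin n, a q p * z p) * w q := by
    have hx : ∀ x : Fin n, eps n ℓ x * ∑ x_1 : Fin n, ∑ x_2 : Fin n,
        eps n ℓ x_2 * a x_2 x_1 * eps n ℓ x * z x_1 * w x_2
        = ∑ q : Fin n, (eps n ℓ q * ∑ p : Fin n, a q p * z p) * w q := by
      intro x
      simp only [Finset.mul_sum]
      rw [Finset.sum_comm]
      refine Finset.sum_congr rfl fun q _ => ?_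
      rw [Finset.sum_mul]
      refine Finset.sum_congr rfl fun p _ => ?_
      linear_combination (eps n ℓ q * a q p * z p * w q) * eps_sq n ℓ x
    rw [Finset.sum_congr rfl fun x _ => hx x, Finset.sum_const, Finset.card_univ,
      Fintype.card_fin, nsmul_eq_mul]
  rw [hT1, hT2, hT3, hT4]
  ring

end Aux

/-- if `⟨a⁽¹⁾(z), z̄⟩_ℓ |z|_ℓ² = (1/4)(s - s♯)` with `s, s♯` real
`△_ℓ`-harmonic bidegree (2,2) polynomials, then `a⁽¹⁾ ≡ 0` and `s ≡ s♯`. -/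
theorem stmt6 {n ℓ : ℕ} (hn : 2 ≤ n) (hl : 2 * ℓ ≤ n)
    (a : Fin n → Fin n → ℂ)
    (s t : Fin n → Fin n → Fin n → Fin n → ℂ)
    (hsreal : ∀ α β γ δ, conj (s α β γ δ) = s β α δ γ)
    (htreal : ∀ α β γ δ, conj (t α β γ δ) = t β α δ γ)
    (hs : ∀ z : Fin n → ℂ, lapL ℓ (quartic s) z (fun j => conj (z j)) = 0)
    (ht : ∀ z : Fin n → ℂ, lapL ℓ (quartic t) z (fun j => conj (z j)) = 0)
    (heq : ∀ z : Fin n → ℂ,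
      (∑ j : Fin n, eps n ℓ j * (∑ k : Fin n, a j k * z k) * conj (z j)) * nSq n ℓ z
        = (1 / 4) * (quartic s z (fun j => conj (z j))
            - quartic t z (fun j => conj (z j)))) :
    (∀ (z : Fin n → ℂ) (j : Fin n), (∑ k : Fin n, a j k * z k) = 0) ∧
    (∀ z : Fin n → ℂ,
      quartic s z (fun j => conj (z j)) = quartic t z (fun j => conj (z j))) := by
  classical
  have hu : ∀ z : Fin n → ℂ, quartic (uMat n ℓ a) z (fun j => conj (z j))
      = (∑ j : Fin n, eps n ℓ j * (∑ k : Fin n, a j k * z k) * conj (z j)) * nSq n ℓ z := by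
    intro z
    rw [quartic_u]
    rfl
  have hdiag : ∀ z : Fin n → ℂ,
      quartic (fun α β γ δ => uMat n ℓ a α β γ δ - (1/4) * (s α β γ δ - t α β γ δ)) z
        (fun j => conj (z j)) = 0 := by
    intro z
    rw [quartic_lin, hu z]
    linear_combination heq z
  have hpol : ∀ z w : Fin n → ℂ,
      quartic (fun α β γ δ => uMat n ℓ a α β γ δ - (1/4) * (s α β γ δ - t α β γ δ)) z w = 0 := by
    intro z w
    have h0 : ∀ l : ℂ, quartic (fun α β γ δ => uMat n ℓ a α β γ δ - (1/4) * (s α β γ δ - t α β γ δ))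
        (fun j => l * z j + conj (w j)) (fun j => conj l * conj (z j) + w j) = 0 := by
      intro l
      have hcc : (fun j : Fin n => conj l * conj (z j) + w j)
          = (fun j : Fin n => conj ((fun j : Fin n => l * z j + conj (w j)) j)) := by
        funext j
        simp [map_add, map_mul]
      rw [hcc]
      exact hdiag _
    have h9 := fun l : ℂ =>
      (expand22 (fun α β γ δ => uMat n ℓ a α β γ δ - (1/4) * (s α β γ δ - t α β γ δ)) z w l).symm.trans (h0 l)
    exact key22 _ _ _ _ _ _ _ _ _ h9
  have hfun : quartic (uMat n ℓ a)
      = quartic (fun α β γ δ => (1/4) * (s α β γ δ - t α β γ δ)) := by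
    funext z w
    have h1 := hpol z w
    rw [quartic_lin] at h1
    rw [quartic_smul_sub]
    linear_combination h1
  have hkey : ∀ z : Fin n → ℂ,
      (∑ k : Fin n, a k k) * (∑ m : Fin n, eps n ℓ m * z m * conj (z m))
        + ((n:ℂ) + 2) * (∑ q : Fin n, eps n ℓ q * (∑ p : Fin n, a q p * z p) * conj (z q)) = 0 := by
    intro z
    rw [← Bform_u ℓ a z (fun j => conj (z j)), ← lap_quartic, hfun, lap_quartic]
    have hs' := hs z
    have ht' := ht z
    rw [lap_quartic] at hs' ht'
    have hsplit : (∑ j : Fin n, eps n ℓ j *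
        ∑ α : Fin n, ∑ β : Fin n, ∑ γ : Fin n, ∑ δ : Fin n,
          (1/4 * (s α β γ δ - t α β γ δ))
            * ((if α = j then z γ else 0) + (if γ = j then z α else 0))
            * ((if β = j then conj (z δ) else 0) + (if δ = j then conj (z β) else 0)))
        = (1/4) * ((∑ j : Fin n, eps n ℓ j *
            ∑ α : Fin n, ∑ β : Fin n, ∑ γ : Fin n, ∑ δ : Fin n,
              s α β γ δ * ((if α = j then z γ else 0) + (if γ = j then z α else 0))
                * ((if β = j then conj (z δ) else 0) + (if δ = j then conj (z β) else 0)))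
          - (∑ j : Fin n, eps n ℓ j *
            ∑ α : Fin n, ∑ β : Fin n, ∑ γ : Fin n, ∑ δ : Fin n,
              t α β γ δ * ((if α = j then z γ else 0) + (if γ = j then z α else 0))
                * ((if β = j then conj (z δ) else 0) + (if δ = j then conj (z β) else 0)))) := by
      simp only [Finset.mul_sum, ← Finset.sum_sub_distrib]
      refine Finset.sum_congr rfl fun j _ => Finset.sum_congr rfl fun α _ =>
        Finset.sum_congr rfl fun β _ => Finset.sum_congr rfl fun γ _ =>
        Finset.sum_congr rfl fun δ _ => by ring
    rw [hsplit, hs', ht']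
    norm_num
  have hsingle : ∀ k : Fin n, (∑ k' : Fin n, a k' k') + ((n:ℂ) + 2) * a k k = 0 := by
    intro k
    have h1 := hkey (Pi.single k 1)
    simp only [Pi.single_apply, apply_ite (conj : ℂ → ℂ), map_one, map_zero, mul_ite, ite_mul,
      mul_zero, zero_mul, mul_one, one_mul, Finset.sum_ite_eq', Finset.mem_univ, if_true,
      Finset.sum_ite_eq, Finset.sum_ite_irrel, Finset.sum_const_zero] at h1
    linear_combination (eps n ℓ k) * h1
      - ((∑ k' : Fin n, a k' k') + ((n:ℂ) + 2) * a k k) * eps_sq n ℓ k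
  have h2n2 : ((2:ℂ) * (n:ℂ) + 2) ≠ 0 := by
    have : ((2 * n + 2 : ℕ) : ℂ) ≠ 0 := Nat.cast_ne_zero.mpr (by omega)
    push_cast at this
    convert this using 1
  have hTrace : (∑ k : Fin n, a k k) = 0 := by
    have hsum : ∑ k : Fin n, ((∑ k' : Fin n, a k' k') + ((n:ℂ) + 2) * a k k) = 0 := by
      simp [hsingle]
    rw [Finset.sum_add_distrib, Finset.sum_const, Finset.card_univ, Fintype.card_fin,
      nsmul_eq_mul, ← Finset.mul_sum] at hsum
    have h3 : ((2:ℂ) * (n:ℂ) + 2) * (∑ k : Fin n, a k k) = 0 := by linear_combination hsum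
    exact (mul_eq_zero.mp h3).resolve_left h2n2
  have hn2 : ((n:ℂ) + 2) ≠ 0 := by
    have : ((n + 2 : ℕ) : ℂ) ≠ 0 := Nat.cast_ne_zero.mpr (by omega)
    push_cast at this
    convert this using 1
  have hf0 : ∀ z : Fin n → ℂ,
      (∑ q : Fin n, eps n ℓ q * (∑ p : Fin n, a q p * z p) * conj (z q)) = 0 := by
    intro z
    have h1 := hkey z
    rw [hTrace, zero_mul, zero_add] at h1
    exact (mul_eq_zero.mp h1).resolve_left hn2
  have hbil : ∀ z w : Fin n → ℂ,
      (∑ q : Fin n, eps n ℓ q * (∑ p : Fin n, a q p * z p) * w q) = 0 := by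
    intro z w
    have h0 : ∀ l : ℂ, ∑ q : Fin n, eps n ℓ q * (∑ p : Fin n, a q p * (l * z p + conj (w p)))
        * (conj l * conj (z q) + w q) = 0 := by
      intro l
      have h0' := hf0 (fun j => l * z j + conj (w j))
      have hcc : ∀ q : Fin n, conj (l * z q + conj (w q)) = conj l * conj (z q) + w q := by
        intro q
        simp [map_add, map_mul]
      simp only [hcc] at h0'
      exact h0'
    have h4 := fun l : ℂ => (expand11 (eps n ℓ) a z w l).symm.trans (h0 l)
    exact key11 _ _ _ _ h4
  have ha : ∀ (z : Fin n → ℂ) (j : Fin n), (∑ k : Fin n, a j k * z k) = 0 := by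
    intro z j
    have h1 := hbil z (Pi.single j 1)
    simp only [Pi.single_apply, mul_ite, ite_mul, mul_zero, zero_mul, mul_one, one_mul,
      Finset.sum_ite_eq', Finset.mem_univ, if_true] at h1
    exact (mul_eq_zero.mp h1).resolve_left (eps_ne n ℓ j)
  refine ⟨ha, fun z => ?_⟩
  have h1 := heq z
  simp only [ha z, mul_zero, zero_mul, Finset.sum_const_zero] at h1
  linear_combination (-4 : ℂ) * h1


end
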